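/- Let f : ℝⁿ → ℝⁿ be locally Lipschitz and V : ℝⁿ → ℝ₊ be a convex, continuously differentiable, positive definite function with ∇V(x)·f(x) < 0 for all x ≠ 0. Suppose Y ∈ ℝⁿ and h ≥ 0 satisfy the implicit Euler equation Y = x + h f(Y). Then V(Y) ≤ V(x). -/

import Mathlib

open Real RealInnerProductSpace

theorem stmt6 (n : ℕ) (f : EuclideanSpace ℝ (Fin n) → EuclideanSpace ℝ (Fin n))
    (hf : LocallyLipschitz f)
    (V : EuclideanSpace ℝ (Fin n) → ℝ)
    (hVconv : ConvexOn ℝ Set.univ V) (hVC1 : ContDiff ℝ 1 V)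
    (hV0 : V 0 = 0) (hVpos : ∀ x ≠ 0, 0 < V x)
    (hLyap : ∀ x ≠ 0, ⟪gradient V x, f x⟫ < 0)
    (x Y : EuclideanSpace ℝ (Fin n)) (h : ℝ) (hh : 0 ≤ h)
    (hY : Y = x + h • f Y) :
    V Y ≤ V x := by
  by_cases hY0 : Y = 0
  · subst hY0
    rw [hV0]
    rcases eq_or_ne x 0 with rfl | hx0
    · rw [hV0]
    · exact (hVpos x hx0).le
  -- set up the 1-dimensional restriction g t = V (Y + t • (x - Y))
  set c : ℝ → EuclideanSpace ℝ (Fin n) := fun t => t • (x - Y) + Y with hc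
  have hcg : (fun t => V (c t)) = V ∘ (AffineMap.lineMap Y x) := by
    funext t; simp [hc, AffineMap.lineMap_apply]
  have hgconv : ConvexOn ℝ Set.univ (fun t => V (c t)) := by
    rw [hcg]
    have := hVconv.comp_affineMap (AffineMap.lineMap Y x : ℝ →ᵃ[ℝ] EuclideanSpace ℝ (Fin n))
    simpa using this
  have hVdiff : DifferentiableAt ℝ V Y := (hVC1.differentiable one_ne_zero) Y
  have hVgrad : HasFDerivAt V
      (InnerProductSpace.toDual ℝ _ (gradient V Y)) Y := by
    have := hVdiff.hasFDerivAt
    rwa [show InnerProductSpace.toDual ℝ _ (gradient V Y) = fderiv ℝ V Y from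
      (InnerProductSpace.toDual ℝ _).apply_symm_apply _]
  have hcderiv : HasDerivAt c (x - Y) 0 := by
    have := ((hasDerivAt_id (0:ℝ)).smul_const (x - Y)).add_const Y
    simp only [one_smul] at this
    exact this
  have hc0 : c 0 = Y := by simp [hc]
  have hgd : HasDerivAt (fun t => V (c t)) ⟪gradient V Y, x - Y⟫ 0 := by
    rw [← hc0] at hVgrad
    have := hVgrad.comp_hasDerivAt 0 hcderiv
    rw [InnerProductSpace.toDual_apply_apply] at this
    rw [hc0] at this
    exact this
  have hslope := hgconv.le_slope_of_hasDerivAt (Set.mem_univ 0) (Set.mem_univ 1)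
    one_pos hgd
  have hc1 : c 1 = x := by simp [hc]
  rw [slope_def_field, hc0, hc1] at hslope
  simp only [div_one, sub_zero] at hslope
  -- hslope : ⟪gradient V Y, x - Y⟫ ≤ V x - V Y
  have hxY : x - Y = -(h • f Y) := by
    nth_rewrite 1 [hY]; abel
  have hkey : 0 ≤ ⟪gradient V Y, x - Y⟫ := by
    rw [hxY, inner_neg_right, inner_smul_right]
    have := hLyap Y hY0
    nlinarith
  linarith
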